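/- Failure of the consistency conditions for the pooled-outcome metric: let d₀(x,y) = (|x| − |y|)² on [−1,1], m(x) = x/2, and ρ(x) = x/(4−x) for x ≥ 0, ρ(x) = −3x/(4−x) for x < 0. Then there is no constant C > 0 with d₀(x,y) ≥ C·|m(x) − m(y)| for all x, y ∈ [−1,1], and there is no constant C > 0 with d₀(x,y) ≥ C·|ρ(x) − ρ(y)| for all x, y ∈ [−1,1]; indeed for every x ∈ (0,1], d₀(x, −x) = 0 while |m(x) − m(−x)| = x > 0 and |ρ(x) − ρ(−x)| = |x/(4−x) − 3x/(4+x)| > 0. -/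

import Mathlib

/-- The pooled-outcome pseudometric of the Section 2 counterexample:
`d₀(x,y) = (|x| − |y|)²`. -/
noncomputable def pooledMetric (x y : ℝ) : ℝ := (|x| - |y|) ^ 2

/-- The control conditional mean of the Section 2 counterexample: `m(x) = x/2`. -/
noncomputable def ctrlMean (x : ℝ) : ℝ := x / 2

/-- The propensity score of the Section 2 counterexample:
`ρ(x) = x/(4−x)` for `x ≥ 0` and `ρ(x) = −3x/(4−x)` for `x < 0`. -/
noncomputable def propScore (x : ℝ) : ℝ :=
  if 0 ≤ x then x / (4 - x) else (-3 * x) / (4 - x)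

lemma propScore_diff (x : ℝ) (hx : 0 < x) :
    propScore x - propScore (-x) = x / (4 - x) - 3 * x / (4 + x) := by
  unfold propScore
  rw [if_pos hx.le, if_neg (by linarith)]
  ring_nf

/-- **Failure of the consistency conditions for the pooled-outcome metric.** There is no
`C > 0` with `d₀(x,y) ≥ C·|m(x) − m(y)|` on `[−1,1]` (PGM_C), and no `C > 0` with
`d₀(x,y) ≥ C·|ρ(x) − ρ(y)|` on `[−1,1]` (PSM); indeed for every `x ∈ (0,1]`,
`d₀(x,−x) = 0` while `|m(x) − m(−x)| = x > 0` and
`|ρ(x) − ρ(−x)| = |x/(4−x) − 3x/(4+x)| > 0`. -/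
theorem pooled_metric_fails_consistency_conditions :
    (¬ ∃ C : ℝ, 0 < C ∧ ∀ x ∈ Set.Icc (-1 : ℝ) 1, ∀ y ∈ Set.Icc (-1 : ℝ) 1,
      C * |ctrlMean x - ctrlMean y| ≤ pooledMetric x y) ∧
    (¬ ∃ C : ℝ, 0 < C ∧ ∀ x ∈ Set.Icc (-1 : ℝ) 1, ∀ y ∈ Set.Icc (-1 : ℝ) 1,
      C * |propScore x - propScore y| ≤ pooledMetric x y) ∧
    ∀ x ∈ Set.Ioc (0 : ℝ) 1,
      pooledMetric x (-x) = 0 ∧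
      |ctrlMean x - ctrlMean (-x)| = x ∧ 0 < x ∧
      |propScore x - propScore (-x)| = |x / (4 - x) - 3 * x / (4 + x)| ∧
      0 < |propScore x - propScore (-x)| := by
  refine ⟨?_, ?_, ?_⟩
  · rintro ⟨C, hC, h⟩
    have := h 1 (by norm_num) (-1) (by norm_num)
    simp only [ctrlMean, pooledMetric] at this
    norm_num [abs_of_nonneg] at this
    linarith
  · rintro ⟨C, hC, h⟩
    have := h 1 (by norm_num) (-1) (by norm_num)
    rw [propScore_diff 1 one_pos] at this
    simp only [pooledMetric] at this
    norm_num at this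
    linarith
  · intro x hx
    obtain ⟨hx0, hx1⟩ := hx
    have h4 : (4 : ℝ) - x > 0 := by linarith
    have h4' : (4 : ℝ) + x > 0 := by linarith
    have hd := propScore_diff x hx0
    refine ⟨?_, ?_, hx0, by rw [hd], ?_⟩
    · simp [pooledMetric, abs_of_pos hx0, abs_of_neg (neg_neg_iff_pos.mpr hx0 : -x < 0)]
    · rw [show ctrlMean x - ctrlMean (-x) = x from by unfold ctrlMean; ring, abs_of_pos hx0]
    · rw [hd, abs_pos]
      intro hzero
      have : x * (4 + x) - 3 * x * (4 - x) = 0 := by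
        field_simp at hzero
        linarith
      nlinarith
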